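/- For the coordinate-wise box depth in ℝ^d (depth based on axis-parallel closed boxes), the maximum depth is at least 1/2 and is attained at the coordinate-wise median. -/

import Mathlib

open MeasureTheory
open scoped ENNReal

lemma halfspace_le_sSup_left (d : ℕ)
    (μ : Measure (EuclideanSpace ℝ (Fin d))) [IsProbabilityMeasure μ]
    (i : Fin d) (c : ℝ) (x : EuclideanSpace ℝ (Fin d)) (hx : c < x i) :
    μ {y : EuclideanSpace ℝ (Fin d) | y i ≤ c} ≤ sSup {r : ℝ≥0∞ | ∃ a b : Fin d → ℝ,
      x ∉ {y : EuclideanSpace ℝ (Fin d) | ∀ j, a j ≤ y j ∧ y j ≤ b j} ∧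
      r = μ {y : EuclideanSpace ℝ (Fin d) | ∀ j, a j ≤ y j ∧ y j ≤ b j}} := by
  set s : ℕ → Set (EuclideanSpace ℝ (Fin d)) :=
    fun n => {y | ∀ j, (-(n:ℝ)) ≤ y j ∧ y j ≤ (if j = i then c else (n:ℝ))} with hs
  have hmono : Monotone s := by
    intro n k hnk y hy j
    have hcast : (n:ℝ) ≤ (k:ℝ) := Nat.cast_le.mpr hnk
    refine ⟨le_trans (by linarith) (hy j).1, ?_⟩
    refine le_trans (hy j).2 ?_
    split <;> [exact le_rfl; exact hcast]
  have hunion : (⋃ n, s n) = {y : EuclideanSpace ℝ (Fin d) | y i ≤ c} := by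
    ext y
    simp only [Set.mem_iUnion, Set.mem_setOf_eq, hs]
    constructor
    · rintro ⟨n, hn⟩
      simpa using (hn i).2
    · intro hy
      have hne : (Finset.univ : Finset (Fin d)).Nonempty := ⟨i, Finset.mem_univ i⟩
      obtain ⟨n, hn⟩ := exists_nat_ge (Finset.univ.sup' hne fun j => |y j|)
      refine ⟨n, fun j => ?_⟩
      have hj : |y j| ≤ (n : ℝ) := le_trans (Finset.le_sup' (f := fun j => |y j|) (Finset.mem_univ j)) hn
      rw [abs_le] at hj
      refine ⟨hj.1, ?_⟩
      split
      · next h => exact h ▸ hy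
      · exact hj.2
  calc μ {y : EuclideanSpace ℝ (Fin d) | y i ≤ c} = ⨆ n, μ (s n) := by
        rw [← hunion]; exact hmono.measure_iUnion
    _ ≤ _ := by
        refine iSup_le fun n => le_sSup ?_
        refine ⟨fun _ => -(n:ℝ), fun j => if j = i then c else (n:ℝ), ?_, rfl⟩
        intro hxmem
        have := (hxmem i).2
        simp only [if_true, eq_self_iff_true] at this
        linarith

lemma halfspace_le_sSup_right (d : ℕ)
    (μ : Measure (EuclideanSpace ℝ (Fin d))) [IsProbabilityMeasure μ]
    (i : Fin d) (c : ℝ) (x : EuclideanSpace ℝ (Fin d)) (hx : x i < c) :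
    μ {y : EuclideanSpace ℝ (Fin d) | c ≤ y i} ≤ sSup {r : ℝ≥0∞ | ∃ a b : Fin d → ℝ,
      x ∉ {y : EuclideanSpace ℝ (Fin d) | ∀ j, a j ≤ y j ∧ y j ≤ b j} ∧
      r = μ {y : EuclideanSpace ℝ (Fin d) | ∀ j, a j ≤ y j ∧ y j ≤ b j}} := by
  set s : ℕ → Set (EuclideanSpace ℝ (Fin d)) :=
    fun n => {y | ∀ j, (if j = i then c else -(n:ℝ)) ≤ y j ∧ y j ≤ (n:ℝ)} with hs
  have hmono : Monotone s := by
    intro n k hnk y hy j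
    have hcast : (n:ℝ) ≤ (k:ℝ) := Nat.cast_le.mpr hnk
    constructor
    · refine le_trans ?_ (hy j).1
      split <;> [exact le_rfl; linarith]
    · exact le_trans (hy j).2 hcast
  have hunion : (⋃ n, s n) = {y : EuclideanSpace ℝ (Fin d) | c ≤ y i} := by
    ext y
    simp only [Set.mem_iUnion, Set.mem_setOf_eq, hs]
    constructor
    · rintro ⟨n, hn⟩
      have := (hn i).1
      simpa using this
    · intro hy
      have hne : (Finset.univ : Finset (Fin d)).Nonempty := ⟨i, Finset.mem_univ i⟩
      obtain ⟨n, hn⟩ := exists_nat_ge (Finset.univ.sup' hne fun j => |y j|)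
      refine ⟨n, fun j => ?_⟩
      have hj : |y j| ≤ (n : ℝ) := le_trans (Finset.le_sup' (f := fun j => |y j|) (Finset.mem_univ j)) hn
      rw [abs_le] at hj
      refine ⟨?_, hj.2⟩
      split
      · next h => exact h ▸ hy
      · exact hj.1
  calc μ {y : EuclideanSpace ℝ (Fin d) | c ≤ y i} = ⨆ n, μ (s n) := by
        rw [← hunion]; exact hmono.measure_iUnion
    _ ≤ _ := by
        refine iSup_le fun n => le_sSup ?_
        refine ⟨fun j => if j = i then c else -(n:ℝ), fun _ => (n:ℝ), ?_, rfl⟩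
        intro hxmem
        have := (hxmem i).1
        simp only [if_true, eq_self_iff_true] at this
        linarith

lemma one_sub_inv_two' : (1 : ℝ≥0∞) - 2⁻¹ = 2⁻¹ := by
  exact ENNReal.one_sub_inv_two

theorem box_depth_max_at_coordinatewise_median (d : ℕ)
    (μ : Measure (EuclideanSpace ℝ (Fin d))) [IsProbabilityMeasure μ]
    (D : EuclideanSpace ℝ (Fin d) → ℝ≥0∞)
    (hD : ∀ x, D x = 1 - sSup {r : ℝ≥0∞ | ∃ a b : Fin d → ℝ,
      x ∉ {y : EuclideanSpace ℝ (Fin d) | ∀ i, a i ≤ y i ∧ y i ≤ b i} ∧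
      r = μ {y : EuclideanSpace ℝ (Fin d) | ∀ i, a i ≤ y i ∧ y i ≤ b i}})
    (m : EuclideanSpace ℝ (Fin d))
    (hm : ∀ i : Fin d, (2 : ℝ≥0∞)⁻¹ ≤ μ {y : EuclideanSpace ℝ (Fin d) | y i ≤ m i} ∧
      (2 : ℝ≥0∞)⁻¹ ≤ μ {y : EuclideanSpace ℝ (Fin d) | m i ≤ y i}) :
    (2 : ℝ≥0∞)⁻¹ ≤ D m ∧ ∀ x, D x ≤ D m := by
  have half : (1 : ℝ≥0∞) - 2⁻¹ = 2⁻¹ := one_sub_inv_two'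
  -- the supremum for m is at most 1/2
  have hsup : sSup {r : ℝ≥0∞ | ∃ a b : Fin d → ℝ,
      m ∉ {y : EuclideanSpace ℝ (Fin d) | ∀ i, a i ≤ y i ∧ y i ≤ b i} ∧
      r = μ {y : EuclideanSpace ℝ (Fin d) | ∀ i, a i ≤ y i ∧ y i ≤ b i}} ≤ 2⁻¹ := by
    refine sSup_le ?_
    rintro r ⟨a, b, hmnot, rfl⟩
    simp only [Set.mem_setOf_eq, not_forall] at hmnot
    obtain ⟨j, hj⟩ := hmnot
    rw [not_and_or, not_le, not_le] at hj
    rcases hj with hj | hj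
    · -- m j < a j : box misses {y | y j ≤ m j}... box ⊆ {y | y j ≤ m j}ᶜ
      have hsub : {y : EuclideanSpace ℝ (Fin d) | ∀ i, a i ≤ y i ∧ y i ≤ b i} ⊆
          {y : EuclideanSpace ℝ (Fin d) | y j ≤ m j}ᶜ := by
        intro y hy hy'
        exact absurd ((hy j).1.trans hy') (not_le.mpr hj)
      have hms : MeasurableSet {y : EuclideanSpace ℝ (Fin d) | y j ≤ m j} :=
        measurableSet_le ((measurable_pi_apply j).comp (WithLp.measurable_ofLp _ _)) measurable_const
      calc μ _ ≤ μ {y : EuclideanSpace ℝ (Fin d) | y j ≤ m j}ᶜ := measure_mono hsub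
        _ = 1 - μ {y : EuclideanSpace ℝ (Fin d) | y j ≤ m j} :=
            prob_compl_eq_one_sub hms
        _ ≤ 1 - 2⁻¹ := tsub_le_tsub_left (hm j).1 1
        _ = 2⁻¹ := half
    · have hsub : {y : EuclideanSpace ℝ (Fin d) | ∀ i, a i ≤ y i ∧ y i ≤ b i} ⊆
          {y : EuclideanSpace ℝ (Fin d) | m j ≤ y j}ᶜ := by
        intro y hy hy'
        exact absurd (hy'.trans (hy j).2) (not_le.mpr hj)
      have hms : MeasurableSet {y : EuclideanSpace ℝ (Fin d) | m j ≤ y j} :=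
        measurableSet_le measurable_const ((measurable_pi_apply j).comp (WithLp.measurable_ofLp _ _))
      calc μ _ ≤ μ {y : EuclideanSpace ℝ (Fin d) | m j ≤ y j}ᶜ := measure_mono hsub
        _ = 1 - μ {y : EuclideanSpace ℝ (Fin d) | m j ≤ y j} :=
            prob_compl_eq_one_sub hms
        _ ≤ 1 - 2⁻¹ := tsub_le_tsub_left (hm j).2 1
        _ = 2⁻¹ := half
  have hDm : (2 : ℝ≥0∞)⁻¹ ≤ D m := by
    rw [hD m]
    calc (2 : ℝ≥0∞)⁻¹ = 1 - 2⁻¹ := half.symm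
      _ ≤ _ := tsub_le_tsub_left hsup 1
  refine ⟨hDm, fun x => ?_⟩
  by_cases hxm : x = m
  · exact hxm ▸ le_rfl
  · have : ∃ i : Fin d, x i ≠ m i := by
      by_contra h
      push_neg at h
      exact hxm (WithLp.ofLp_injective _ (funext h))
    obtain ⟨i, hi⟩ := this
    have hx2 : D x ≤ 2⁻¹ := by
      rw [hD x]
      rcases lt_or_gt_of_ne hi with hlt | hgt
      · -- x i < m i : use halfspace {m i ≤ y i}
        have := (hm i).2.trans (halfspace_le_sSup_right d μ i (m i) x hlt)
        calc (1 : ℝ≥0∞) - _ ≤ 1 - 2⁻¹ := tsub_le_tsub_left this 1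
          _ = 2⁻¹ := half
      · have := (hm i).1.trans (halfspace_le_sSup_left d μ i (m i) x hgt)
        calc (1 : ℝ≥0∞) - _ ≤ 1 - 2⁻¹ := tsub_le_tsub_left this 1
          _ = 2⁻¹ := half
    exact hx2.trans hDm
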